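/- Sherman–Morrison quadratic-form bound: let A be a symmetric positive definite n×n matrix of the form A = dγ I_n + B with B positive semidefinite, and let v ∈ ℝ^n. Then ‖(A + v v^T)^{-1} v‖₂² = (v^T A^{-2} v)/(1 + v^T A^{-1} v)² ≤ 1/(4 d γ). -/

import Mathlib

open Matrix

section Aux

variable {n : ℕ}

lemma aux_vecMulVec_mulVec (v x : Fin n → ℝ) :
    (Matrix.vecMulVec v v).mulVec x = (v ⬝ᵥ x) • v := by
  ext i
  simp only [Matrix.mulVec, Matrix.vecMulVec, dotProduct, Matrix.of_apply,
    Pi.smul_apply, smul_eq_mul, Finset.mul_sum]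
  rw [Finset.sum_mul]
  exact Finset.sum_congr rfl fun j _ => by ring

lemma aux_vecMulVec_psd (v : Fin n → ℝ) : (Matrix.vecMulVec v v).PosSemidef := by
  refine Matrix.PosSemidef.of_dotProduct_mulVec_nonneg ?_ ?_
  · ext i j; simp [Matrix.vecMulVec, Matrix.conjTranspose, mul_comm]
  · intro x
    rw [aux_vecMulVec_mulVec]
    simp only [dotProduct_smul]
    have : star x ⬝ᵥ v = v ⬝ᵥ x := by
      simp [dotProduct, mul_comm]
    rw [this, smul_eq_mul]
    exact mul_self_nonneg _

end Aux

/-- Sherman–Morrison quadratic-form bound: for `A = dγ I + B` with `B ⪰ 0`, `γ > 0`,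
`d ≥ 1`, and any vector `v`,
`‖(A + v vᵀ)⁻¹ v‖₂² = (vᵀ A⁻² v) / (1 + vᵀ A⁻¹ v)² ≤ 1 / (4 d γ)`. -/
theorem sherman_morrison_quadratic_form_bound
    {n : ℕ} (d : ℕ) (hd : 1 ≤ d) (γ : ℝ) (hγ : 0 < γ)
    (B : Matrix (Fin n) (Fin n) ℝ) (hB : B.PosSemidef) (v : Fin n → ℝ) :
    (∑ i, ((((((d : ℝ) * γ) • (1 : Matrix (Fin n) (Fin n) ℝ) + B)
        + Matrix.vecMulVec v v)⁻¹).mulVec v i) ^ 2)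
      = (v ⬝ᵥ ((((d : ℝ) * γ) • (1 : Matrix (Fin n) (Fin n) ℝ) + B)⁻¹ *
          (((d : ℝ) * γ) • (1 : Matrix (Fin n) (Fin n) ℝ) + B)⁻¹).mulVec v)
        / (1 + v ⬝ᵥ ((((d : ℝ) * γ) • (1 : Matrix (Fin n) (Fin n) ℝ) + B)⁻¹).mulVec v) ^ 2
    ∧ (∑ i, ((((((d : ℝ) * γ) • (1 : Matrix (Fin n) (Fin n) ℝ) + B)
        + Matrix.vecMulVec v v)⁻¹).mulVec v i) ^ 2)
      ≤ 1 / (4 * d * γ) := by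
  set A : Matrix (Fin n) (Fin n) ℝ := ((d : ℝ) * γ) • (1 : Matrix (Fin n) (Fin n) ℝ) + B with hA
  have hdγ : (0 : ℝ) < (d : ℝ) * γ := by
    have : (1 : ℝ) ≤ (d : ℝ) := by exact_mod_cast hd
    nlinarith
  -- A is PD
  have hApd : A.PosDef := by
    have h1 : (((d : ℝ) * γ) • (1 : Matrix (Fin n) (Fin n) ℝ)).PosDef := by
      refine Matrix.PosDef.of_dotProduct_mulVec_pos ?_ ?_
      · ext i j
        by_cases h : i = j
        · subst h; simp [Matrix.conjTranspose_apply, Matrix.one_apply]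
        · simp [Matrix.conjTranspose_apply, Matrix.one_apply, h, Ne.symm h]
      · intro x hx
        simp only [Matrix.smul_mulVec, Matrix.one_mulVec, dotProduct_smul,
          smul_eq_mul]
        have hx2 : 0 < star x ⬝ᵥ x := by
          have := dotProduct_star_self_pos_iff (v := x)
          exact this.mpr hx
        positivity
    exact h1.add_posSemidef hB
  have hAinv : A⁻¹.PosDef := hApd.inv
  have hAherm : A⁻¹.IsHermitian := hAinv.isHermitian
  -- u = A⁻¹ v, c = v ⬝ᵥ u
  set u : Fin n → ℝ := A⁻¹.mulVec v with hu
  set c : ℝ := v ⬝ᵥ u with hc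
  have hc0 : 0 ≤ c := by
    rcases eq_or_ne v 0 with rfl | hv
    · simp [hc]
    · have := hAinv.dotProduct_mulVec_pos hv
      simp only [star_trivial] at this
      exact le_of_lt this
  have h1c : (0 : ℝ) < 1 + c := by linarith
  -- A * u = v
  have hAu : A.mulVec u = v := by
    rw [hu, Matrix.mulVec_mulVec,
      Matrix.mul_nonsing_inv _ ((Matrix.isUnit_iff_isUnit_det A).mp hApd.isUnit),
      Matrix.one_mulVec]
  -- M = A + vvᵀ is PD
  set M : Matrix (Fin n) (Fin n) ℝ := A + Matrix.vecMulVec v v with hM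
  have hMpd : M.PosDef := hApd.add_posSemidef (aux_vecMulVec_psd v)
  -- key: M⁻¹ v = (1+c)⁻¹ • u
  have hMw : M.mulVec ((1 + c)⁻¹ • u) = v := by
    rw [Matrix.mulVec_smul, hM, Matrix.add_mulVec, hAu, aux_vecMulVec_mulVec, ← hc]
    have : v + c • v = (1 + c) • v := by
      rw [add_smul, one_smul]
    rw [this, smul_smul, inv_mul_cancel₀ h1c.ne', one_smul]
  have hkey : M⁻¹.mulVec v = (1 + c)⁻¹ • u := by
    conv_lhs => rw [← hMw]
    rw [Matrix.mulVec_mulVec, Matrix.nonsing_inv_mul _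
      ((Matrix.isUnit_iff_isUnit_det M).mp hMpd.isUnit), Matrix.one_mulVec]
  -- the sum equals (u ⬝ᵥ u) / (1+c)^2
  have hsum : (∑ i, (M⁻¹.mulVec v i) ^ 2) = (u ⬝ᵥ u) / (1 + c) ^ 2 := by
    rw [hkey]
    simp only [Pi.smul_apply, smul_eq_mul, mul_pow]
    rw [← Finset.mul_sum]
    rw [div_eq_inv_mul, ← inv_pow]
    congr 1
    simp [dotProduct, sq]
  -- u ⬝ᵥ u = v ⬝ᵥ (A⁻¹ * A⁻¹) v
  have hAt : A⁻¹ᵀ = A⁻¹ := by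
    ext i j
    have := congrFun (congrFun hAherm i) j
    simpa [Matrix.conjTranspose_apply] using this
  have huu : v ⬝ᵥ (A⁻¹ * A⁻¹).mulVec v = u ⬝ᵥ u := by
    rw [← Matrix.mulVec_mulVec, ← hu, Matrix.dotProduct_mulVec, ← Matrix.mulVec_transpose, hAt,
      ← hu]
  -- inequality: d γ * (u ⬝ᵥ u) ≤ c
  have hBu : 0 ≤ u ⬝ᵥ B.mulVec u := by
    have := hB.dotProduct_mulVec_nonneg u
    simpa using this
  have hmain : (d : ℝ) * γ * (u ⬝ᵥ u) ≤ c := by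
    have hca : c = u ⬝ᵥ A.mulVec u := by
      rw [hAu, hc, dotProduct_comm]
    rw [hca, hA, Matrix.add_mulVec, dotProduct_add, Matrix.smul_mulVec,
      Matrix.one_mulVec, dotProduct_smul, smul_eq_mul]
    linarith
  have huu0 : 0 ≤ u ⬝ᵥ u := Finset.sum_nonneg fun i _ => mul_self_nonneg (u i)
  constructor
  · rw [hsum, huu, hc]
  · rw [hsum]
    rw [div_le_div_iff₀ (by positivity) (by positivity)]
    nlinarith [sq_nonneg (1 - c), sq_nonneg c]
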